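/- Let a, b ∈ ℝ with a < b, and let f : [a,b] → ℝ be a convex function. Let x_i ∈ [a,b], i ∈ ℕ, and λ_i ≥ 0, i ∈ ℕ, be such that ∑_{i=1}^∞ λ_i = 1, and let t ∈ [0,1] be such that ∑_{i=1}^∞ λ_i x_i = t·a + (1−t)·b. Then f(t·a + (1−t)·b) = f(∑_{i=1}^∞ λ_i x_i) ≤ ∑_{i=1}^∞ λ_i f(x_i) ≤ t·f(a) + (1−t)·f(b). -/

import Mathlib

/-- Pavić's theorem: for a convex `f : [a,b] → ℝ`, points `x_i ∈ [a,b]`, weights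
`λ_i ≥ 0` with `∑ λ_i = 1`, and `t ∈ [0,1]` with `∑ λ_i x_i = t·a + (1−t)·b`, we have
`f(t·a+(1−t)·b) = f(∑ λ_i x_i) ≤ ∑ λ_i f(x_i) ≤ t·f(a) + (1−t)·f(b)`. -/
theorem stmt_3 (a b : ℝ) (hab : a < b) (f : ℝ → ℝ)
    (hf : ConvexOn ℝ (Set.Icc a b) f) (x : ℕ → ℝ) (hx : ∀ i, x i ∈ Set.Icc a b)
    (lam : ℕ → ℝ) (hlam : ∀ i, 0 ≤ lam i) (hsum : HasSum lam 1)
    (t : ℝ) (ht : t ∈ Set.Icc (0 : ℝ) 1)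
    (htx : ∑' i, lam i * x i = t * a + (1 - t) * b) :
    f (t * a + (1 - t) * b) = f (∑' i, lam i * x i) ∧
    f (∑' i, lam i * x i) ≤ ∑' i, lam i * f (x i) ∧
    ∑' i, lam i * f (x i) ≤ t * f a + (1 - t) * f b := by
  have hba : (0:ℝ) < b - a := sub_pos.mpr hab
  set c : ℝ := t * a + (1 - t) * b with hc_def
  have hamem : a ∈ Set.Icc a b := Set.left_mem_Icc.mpr hab.le
  have hbmem : b ∈ Set.Icc a b := Set.right_mem_Icc.mpr hab.le
  -- upper bound for f on [a,b]
  have hup : ∀ y ∈ Set.Icc a b, f y ≤ max (f a) (f b) := by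
    intro y hy
    obtain ⟨p, q, hp, hq, hpq, hval⟩ := (Convex.mem_Icc hab.le).mp hy
    have h1 := hf.2 hamem hbmem hp hq hpq
    simp only [smul_eq_mul, hval] at h1
    calc f y ≤ p * f a + q * f b := h1
      _ ≤ p * max (f a) (f b) + q * max (f a) (f b) :=
        add_le_add (mul_le_mul_of_nonneg_left (le_max_left _ _) hp)
          (mul_le_mul_of_nonneg_left (le_max_right _ _) hq)
      _ = max (f a) (f b) := by rw [← add_mul, hpq, one_mul]
  -- lower bound for f on [a,b]
  have hlow : ∀ y ∈ Set.Icc a b, 2 * f ((a+b)/2) - max (f a) (f b) ≤ f y := by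
    intro y hy
    have hy' : a + b - y ∈ Set.Icc a b := ⟨by linarith [hy.2], by linarith [hy.1]⟩
    have h2 := hf.2 hy hy' (by norm_num : (0:ℝ) ≤ 1/2) (by norm_num : (0:ℝ) ≤ 1/2)
      (by norm_num : (1/2:ℝ) + 1/2 = 1)
    have he : (1/2 : ℝ) • y + (1/2:ℝ) • (a + b - y) = (a+b)/2 := by
      simp [smul_eq_mul]; ring
    rw [he] at h2
    have h3 := hup _ hy'
    simp only [smul_eq_mul] at h2
    linarith
  set M : ℝ := max (max (f a) (f b)) (max (f a) (f b) - 2 * f ((a+b)/2)) with hM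
  have habs : ∀ i, |f (x i)| ≤ M := by
    intro i
    rw [abs_le]
    constructor
    · have h1 := hlow _ (hx i)
      have h2 := le_max_right (max (f a) (f b)) (max (f a) (f b) - 2 * f ((a+b)/2))
      simp only [hM]; linarith
    · have h1 := hup _ (hx i)
      have h2 := le_max_left (max (f a) (f b)) (max (f a) (f b) - 2 * f ((a+b)/2))
      simp only [hM]; linarith
  have hsl : Summable lam := hsum.summable
  have hsumfx : Summable (fun i => lam i * f (x i)) := by
    apply Summable.of_norm_bounded (hsl.mul_right M)
    intro i
    rw [Real.norm_eq_abs, abs_mul, abs_of_nonneg (hlam i)]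
    exact mul_le_mul_of_nonneg_left (habs i) (hlam i)
  have hsumlx : Summable (fun i => lam i * x i) := by
    apply Summable.of_norm_bounded (g := fun i => lam i * max |a| |b|) (hsl.mul_right _)
    intro i
    rw [Real.norm_eq_abs, abs_mul, abs_of_nonneg (hlam i)]
    refine mul_le_mul_of_nonneg_left ?_ (hlam i)
    rw [abs_le]
    constructor
    · have h1 := neg_abs_le a
      have h2 := le_max_left |a| |b|
      have h3 := (hx i).1
      linarith
    · have h1 := le_abs_self b
      have h2 := le_max_right |a| |b|
      have h3 := (hx i).2
      linarith
  have hcsum : HasSum (fun i => lam i * x i) c := htx ▸ hsumlx.hasSum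
  have hcmem : c ∈ Set.Icc a b := by
    constructor
    · have := ht.2; nlinarith [ht.1]
    · have := ht.1; nlinarith [ht.2]
  -- the weights s i
  set s : ℕ → ℝ := fun i => (b - x i) / (b - a) with hs
  have hs0 : ∀ i, 0 ≤ s i := fun i => div_nonneg (by linarith [(hx i).2]) hba.le
  have hs1 : ∀ i, s i ≤ 1 := fun i => (div_le_one hba).mpr (by linarith [(hx i).1])
  have hsx : ∀ i, s i * a + (1 - s i) * b = x i := by
    intro i
    simp only [hs]
    field_simp
    ring
  have hfx : ∀ i, f (x i) ≤ s i * f a + (1 - s i) * f b := by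
    intro i
    have h1 := hf.2 hamem hbmem (hs0 i) (by linarith [hs1 i]) (by ring : s i + (1 - s i) = 1)
    simp only [smul_eq_mul, hsx i] at h1
    exact h1
  have hst : HasSum (fun i => lam i * s i) t := by
    have h1 : HasSum (fun i => (lam i * b - lam i * x i) * (b - a)⁻¹) ((1 * b - c) * (b-a)⁻¹) :=
      ((hsum.mul_right b).sub hcsum).mul_right _
    have h2 : (1 * b - c) * (b - a)⁻¹ = t := by
      rw [hc_def]
      field_simp
      ring
    have h3 : (fun i => lam i * s i) = fun i => (lam i * b - lam i * x i) * (b - a)⁻¹ := by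
      funext i
      simp only [hs, div_eq_mul_inv]
      ring
    rw [h3, ← h2]
    exact h1
  -- third inequality
  have hRsum : HasSum (fun i => lam i * (s i * f a + (1 - s i) * f b)) (t * f a + (1 - t) * f b) := by
    have h1 : HasSum (fun i => lam i * s i * f a) (t * f a) := hst.mul_right _
    have h2 : HasSum (fun i => (lam i - lam i * s i) * f b) ((1 - t) * f b) := (hsum.sub hst).mul_right _
    have h3 : (fun i => lam i * (s i * f a + (1 - s i) * f b))
        = fun i => lam i * s i * f a + (lam i - lam i * s i) * f b := by funext i; ring
    rw [h3]
    exact h1.add h2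
  have hthird : ∑' i, lam i * f (x i) ≤ t * f a + (1 - t) * f b := by
    rw [← hRsum.tsum_eq]
    exact Summable.tsum_le_tsum (fun i => mul_le_mul_of_nonneg_left (hfx i) (hlam i)) hsumfx hRsum.summable
  -- middle inequality
  have hmid : f c ≤ ∑' i, lam i * f (x i) := by
    rcases eq_or_lt_of_le hcmem.1 with hca | hca
    · -- c = a
      have hz : HasSum (fun i => lam i * x i - lam i * a) 0 := by
        have h := hcsum.sub (hsum.mul_right a)
        rw [← hca] at h
        simpa using h
      have hnn : ∀ i, 0 ≤ lam i * x i - lam i * a := by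
        intro i
        have h1 := (hx i).1
        nlinarith [hlam i]
      have heq : ∀ i, lam i * f (x i) = lam i * f a := by
        intro i
        have h0 := congrFun ((hasSum_zero_iff_of_nonneg hnn).mp hz) i
        simp only [Pi.zero_apply] at h0
        rcases eq_or_lt_of_le (hlam i) with h | h
        · rw [← h]; ring
        · have hxa : x i = a := by nlinarith
          rw [hxa]
      have hhs : HasSum (fun i => lam i * f (x i)) (f a) := by
        rw [funext heq]
        simpa using hsum.mul_right (f a)
      rw [hhs.tsum_eq, ← hca]
    · rcases eq_or_lt_of_le hcmem.2 with hcb | hcb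
      · -- c = b
        have hz : HasSum (fun i => lam i * b - lam i * x i) 0 := by
          have h := (hsum.mul_right b).sub hcsum
          rw [hcb] at h
          simpa using h
        have hnn : ∀ i, 0 ≤ lam i * b - lam i * x i := by
          intro i
          have h1 := (hx i).2
          nlinarith [hlam i]
        have heq : ∀ i, lam i * f (x i) = lam i * f b := by
          intro i
          have h0 := congrFun ((hasSum_zero_iff_of_nonneg hnn).mp hz) i
          simp only [Pi.zero_apply] at h0
          rcases eq_or_lt_of_le (hlam i) with h | h
          · rw [← h]; ring
          · have hxb : x i = b := by nlinarith
            rw [hxb]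
        have hhs : HasSum (fun i => lam i * f (x i)) (f b) := by
          rw [funext heq]
          simpa using hsum.mul_right (f b)
        rw [hhs.tsum_eq, hcb]
      · -- a < c < b : supporting line
        set m : ℝ := sSup ((fun u => (f c - f u) / (c - u)) '' Set.Ico a c) with hm
        have hne : ((fun u => (f c - f u) / (c - u)) '' Set.Ico a c).Nonempty :=
          ⟨_, ⟨a, ⟨le_refl a, hca⟩, rfl⟩⟩
        have hbdd : BddAbove ((fun u => (f c - f u) / (c - u)) '' Set.Ico a c) := by
          refine ⟨(f b - f c) / (b - c), ?_⟩
          rintro y ⟨u, hu, rfl⟩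
          exact hf.slope_mono_adjacent ⟨hu.1, (hu.2.trans hcb).le⟩ hbmem hu.2 hcb
        have hsupp : ∀ y ∈ Set.Icc a b, f c + m * (y - c) ≤ f y := by
          intro y hy
          rcases lt_trichotomy y c with h | h | h
          · have h1 : (f c - f y) / (c - y) ≤ m := le_csSup hbdd ⟨y, ⟨hy.1, h⟩, rfl⟩
            rw [div_le_iff₀ (by linarith : (0:ℝ) < c - y)] at h1
            nlinarith
          · rw [h]; simp
          · have h1 : m ≤ (f y - f c) / (y - c) := by
              apply csSup_le hne
              rintro z ⟨u, hu, rfl⟩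
              exact hf.slope_mono_adjacent ⟨hu.1, (hu.2.trans hcb).le⟩ hy hu.2 h
            rw [le_div_iff₀ (by linarith : (0:ℝ) < y - c)] at h1
            linarith
        have hg : HasSum (fun i => lam i * (f c + m * (x i - c))) (f c) := by
          have h1 : HasSum (fun i => lam i * f c) (f c) := by simpa using hsum.mul_right (f c)
          have h2 : HasSum (fun i => m * (lam i * x i - lam i * c)) 0 := by
            have h := (hcsum.sub (hsum.mul_right c)).mul_left m
            simpa using h
          have h3 := h1.add h2
          rw [add_zero] at h3
          have h4 : (fun i => lam i * (f c + m * (x i - c)))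
              = fun i => lam i * f c + m * (lam i * x i - lam i * c) := by funext i; ring
          rw [h4]
          exact h3
        calc f c = ∑' i, lam i * (f c + m * (x i - c)) := hg.tsum_eq.symm
          _ ≤ ∑' i, lam i * f (x i) :=
            Summable.tsum_le_tsum (fun i => mul_le_mul_of_nonneg_left (hsupp _ (hx i)) (hlam i))
              hg.summable hsumfx
  refine ⟨by rw [htx], ?_, hthird⟩
  rw [htx]
  exact hmid
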